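/- Let n ≥ 1 and let a : Fin n → ℂ be any coefficients. In the complex Euclidean space with orthonormal standard basis {e_{(i,j)} : 0 ≤ i ≤ n, j = 0 or i < j ≤ n}, with v_i = (1/√n)(e_{(0,0)} + Σ_{j=i+1}^{n} e_{(i,j)} − Σ_{j=1}^{i−1} e_{(j,i)}) for 1 ≤ i ≤ n, the vector Σ_{i=1}^n a_i v_i equals ((Σ_{i=1}^n a_i)/√n) e_{(0,0)} + (1/√n) Σ_{1 ≤ i < j ≤ n} (a_i − a_j) e_{(i,j)}; in particular its coordinate at every index (i,0) with 1 ≤ i ≤ n is 0. -/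

import Mathlib

/-- Valid basis indices: `(i,0)` for `0 ≤ i ≤ n` (this includes `(0,0)`), and
`(i,j)` for `1 ≤ i < j ≤ n`. -/
def ValidIdx (n : ℕ) (p : Fin (n + 1) × Fin (n + 1)) : Prop :=
  p.2.val = 0 ∨ (1 ≤ p.1.val ∧ p.1.val < p.2.val)

instance (n : ℕ) : DecidablePred (ValidIdx n) := fun p => by
  unfold ValidIdx; infer_instance

/-- The index set of the orthonormal standard basis. -/
abbrev BIdx (n : ℕ) := {p : Fin (n + 1) × Fin (n + 1) // ValidIdx n p}

/-- The standard basis vector `e_{(a,b)}`. -/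
noncomputable def e (n : ℕ) (a b : Fin (n + 1)) (h : ValidIdx n (a, b)) :
    EuclideanSpace ℂ (BIdx n) :=
  EuclideanSpace.single ⟨(a, b), h⟩ 1

/-- `v_i = (1/√n)(e_{(0,0)} + Σ_{j=i+1}^{n} e_{(i,j)} − Σ_{j=1}^{i−1} e_{(j,i)})`. -/
noncomputable def v (n : ℕ) (i : Fin (n + 1)) (hi : 1 ≤ i.val) :
    EuclideanSpace ℂ (BIdx n) :=
  ((Real.sqrt n : ℂ))⁻¹ •
    (e n 0 0 (Or.inl rfl)
      + (∑ j : Fin (n + 1), if h : i.val < j.val then e n i j (Or.inr ⟨hi, h⟩) else 0)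
      - (∑ j : Fin (n + 1), if h : 1 ≤ j.val ∧ j.val < i.val then e n j i (Or.inr h) else 0))

lemma esum_apply {ι κ : Type} [Fintype κ] (f : κ → EuclideanSpace ℂ ι) (x : ι) :
    (∑ k, f k) x = ∑ k, f k x := by simp [WithLp.ofLp_sum]

lemma e_apply (n : ℕ) (a b : Fin (n+1)) (h : ValidIdx n (a,b)) (x : BIdx n) :
    e n a b h x = if x.1.1.val = a.val ∧ x.1.2.val = b.val then 1 else 0 := by
  simp [e, EuclideanSpace.single_apply, Subtype.ext_iff, Prod.ext_iff, Fin.ext_iff]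

lemma e_apply' (n : ℕ) (a b : Fin (n+1)) (h : b.val = 0 ∨ (1 ≤ a.val ∧ a.val < b.val))
    (x : BIdx n) :
    e n a b h x = if x.1.1.val = a.val ∧ x.1.2.val = b.val then 1 else 0 := e_apply n a b h x

lemma v_apply (n : ℕ) (i : Fin (n+1)) (hi : 1 ≤ i.val) (x : BIdx n) :
    v n i hi x = ((Real.sqrt n : ℂ))⁻¹ *
      ((if x.1.1.val = 0 ∧ x.1.2.val = 0 then 1 else 0)
       + (if x.1.1.val = i.val ∧ i.val < x.1.2.val then 1 else 0)
       - (if 1 ≤ x.1.1.val ∧ x.1.1.val < i.val ∧ x.1.2.val = i.val then 1 else 0)) := by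
  simp only [v, PiLp.smul_apply, PiLp.sub_apply, PiLp.add_apply, smul_eq_mul, esum_apply,
    apply_dite (fun (y : EuclideanSpace ℂ (BIdx n)) => y x), e_apply, e_apply', PiLp.zero_apply,
    Fin.val_zero]
  congr 2
  · congr 1
    · rw [Finset.sum_eq_single x.1.2]
      · split_ifs with h1 h2 h2 h1 <;> first | rfl | omega
      · intro b _ hb
        split_ifs with h1 h2 <;> first | rfl | (exfalso; exact hb (Fin.ext h2.2.symm))
      · simp
  · rw [Finset.sum_eq_single x.1.1]
    · split_ifs with h1 h2 h2 h1 <;> first | rfl | omega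
    · intro b _ hb
      split_ifs with h1 h2 <;> first | rfl | (exfalso; exact hb (Fin.ext h2.1.symm))
    · simp

theorem stmt9 (n : ℕ) (hn : 1 ≤ n) (a : Fin n → ℂ) :
    ((∑ i : Fin n, a i • v n i.succ (Nat.le_add_left 1 i.val)) =
      ((∑ i : Fin n, a i) / (Real.sqrt n : ℂ)) • e n 0 0 (Or.inl rfl)
        + ((Real.sqrt n : ℂ))⁻¹ •
            ∑ i : Fin n, ∑ j : Fin n,
              if h : i.val < j.val then
                (a i - a j) • e n i.succ j.succ
                  (Or.inr ⟨Nat.le_add_left 1 i.val, Nat.succ_lt_succ h⟩)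
              else 0)
    ∧ (∀ (i : Fin (n + 1)), 1 ≤ i.val →
        (∑ i' : Fin n, a i' • v n i'.succ (Nat.le_add_left 1 i'.val))
          ⟨(i, 0), Or.inl rfl⟩ = 0) := by
  have lhs_eval : ∀ x : BIdx n,
      (∑ i' : Fin n, a i' • v n i'.succ (Nat.le_add_left 1 i'.val)) x =
      ∑ i' : Fin n, a i' * (((Real.sqrt n : ℂ))⁻¹ *
        ((if x.1.1.val = 0 ∧ x.1.2.val = 0 then 1 else 0)
         + (if x.1.1.val = i'.val + 1 ∧ i'.val + 1 < x.1.2.val then 1 else 0)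
         - (if 1 ≤ x.1.1.val ∧ x.1.1.val < i'.val + 1 ∧ x.1.2.val = i'.val + 1 then 1 else 0))) := by
    intro x
    simp only [esum_apply, PiLp.smul_apply, smul_eq_mul, v_apply, Fin.val_succ]
  constructor
  · ext x
    rw [lhs_eval x]
    simp only [PiLp.add_apply, PiLp.smul_apply, smul_eq_mul, esum_apply,
      apply_dite (fun (y : EuclideanSpace ℂ (BIdx n)) => y x), PiLp.smul_apply,
      smul_eq_mul, e_apply, e_apply', PiLp.zero_apply, Fin.val_succ, Fin.val_zero]
    obtain ⟨⟨p, q⟩, hx⟩ := x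
    simp only []
    rcases hx with hq | ⟨hp, hpq⟩
    · replace hq : q.val = 0 := hq
      by_cases hp : p.val = 0
      · simp [hp, hq, div_eq_mul_inv, Finset.sum_mul, Nat.add_one_ne_zero, mul_comm]
      · simp [hp, hq, Nat.add_one_ne_zero]
    · replace hp : 1 ≤ p.val := hp
      replace hpq : p.val < q.val := hpq
      have hp0 : ¬ (p.val = 0 ∧ q.val = 0) := by omega
      have hq1 : q.val - 1 < n := by omega
      have hp1 : p.val - 1 < n := by omega
      have e1 : ∀ i' : Fin n,
          a i' * (((Real.sqrt n : ℂ))⁻¹ *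
            ((if p.val = 0 ∧ q.val = 0 then 1 else 0)
             + (if p.val = i'.val + 1 ∧ i'.val + 1 < q.val then 1 else 0)
             - (if 1 ≤ p.val ∧ p.val < i'.val + 1 ∧ q.val = i'.val + 1 then 1 else 0)))
          = ((Real.sqrt n : ℂ))⁻¹ *
            ((if i' = ⟨p.val - 1, hp1⟩ then a i' else 0)
             - (if i' = ⟨q.val - 1, hq1⟩ then a i' else 0)) := by
        intro i'
        rw [if_neg hp0]
        rcases Nat.lt_trichotomy (i'.val + 1) p.val with h | h | h
        · rw [if_neg (by omega), if_neg (by omega), if_neg (by simp [Fin.ext_iff]; omega),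
            if_neg (by simp [Fin.ext_iff]; omega)]
          ring
        · rw [if_pos ⟨h.symm, by omega⟩, if_neg (by omega), if_pos (by simp [Fin.ext_iff]; omega),
            if_neg (by simp [Fin.ext_iff]; omega)]
          ring
        · by_cases hq' : q.val = i'.val + 1
          · rw [if_neg (by omega), if_pos ⟨hp, by omega, hq'⟩,
              if_neg (by simp [Fin.ext_iff]; omega), if_pos (by simp [Fin.ext_iff]; omega)]
            ring
          · rw [if_neg (by omega), if_neg (by omega), if_neg (by simp [Fin.ext_iff]; omega),
              if_neg (by simp [Fin.ext_iff]; omega)]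
            ring
      rw [Finset.sum_congr rfl (fun i' _ => e1 i')]
      have e2 : ∀ i' : Fin n, ∀ j' : Fin n,
          (if h : i'.val < j'.val then
            (a i' - a j') * (if p.val = i'.val + 1 ∧ q.val = j'.val + 1 then (1:ℂ) else 0)
          else 0)
          = if i' = ⟨p.val - 1, hp1⟩ ∧ j' = ⟨q.val - 1, hq1⟩ then a i' - a j' else 0 := by
        intro i' j'
        by_cases h : i'.val < j'.val
        · rw [dif_pos h]
          by_cases h2 : p.val = i'.val + 1 ∧ q.val = j'.val + 1
          · rw [if_pos h2, if_pos (by simp [Fin.ext_iff]; omega)]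
            ring
          · rw [if_neg h2, if_neg (by simp [Fin.ext_iff]; omega)]
            ring
        · rw [dif_neg h, if_neg (by simp [Fin.ext_iff]; omega)]
      rw [Finset.sum_congr rfl (fun i' _ => Finset.sum_congr rfl (fun j' _ => e2 i' j'))]
      simp only [hp0, if_false]
      simp [sub_mul, Finset.sum_sub_distrib, Finset.sum_ite_eq', ite_mul, Finset.mul_sum,
        ite_and, mul_comm]
  · intro i hi
    rw [lhs_eval]
    apply Finset.sum_eq_zero
    intro i' _
    dsimp only
    simp only [Fin.val_zero]
    simp only [show ¬((i:ℕ) = i'+1 ∧ (i':ℕ)+1 < 0) by omega,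
      show ¬(1 ≤ (i:ℕ) ∧ (i:ℕ) < i'+1 ∧ 0 = (i':ℕ)+1) by omega, if_false]
    simp [show (i:ℕ) ≠ 0 by omega]
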